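/- A countably generated ideal I of a commutative ring R is countable strongly annihilated if and only if I is an annihilator ideal, i.e., I = Ann(J) for some ideal J of R. -/
import Mathlib

/-- An ideal `I` is countable strongly annihilated if for each countable subset `S ⊆ I`
and each `b ∉ I` there exists `c` with `c * a = 0` for all `a ∈ S` but `c * b ≠ 0`. -/
def CountableStronglyAnnihilated {R : Type*} [CommRing R] (I : Ideal R) : Prop :=
  ∀ S : Set R, S.Countable → S ⊆ I → ∀ b ∉ I, ∃ c : R, (∀ a ∈ S, c * a = 0) ∧ c * b ≠ 0

/-- A countably generated ideal is countable strongly annihilated iff it is an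
annihilator ideal. -/
theorem stmt13 {R : Type*} [CommRing R] (I : Ideal R)
    (hgen : ∃ S : Set R, S.Countable ∧ I = Ideal.span S) :
    CountableStronglyAnnihilated I ↔ ∃ J : Ideal R, I = Submodule.annihilator J := by
  constructor
  · intro h
    obtain ⟨S, hSc, hspan⟩ := hgen
    refine ⟨Submodule.annihilator I, le_antisymm ?_ ?_⟩
    · intro x hx
      rw [Submodule.mem_annihilator]
      intro n hn
      rw [Submodule.mem_annihilator] at hn
      have := hn x hx
      simpa [smul_eq_mul, mul_comm] using this
    · intro b hb
      by_contra hbI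
      obtain ⟨c, hc1, hc2⟩ := h S hSc (by rw [hspan]; exact Ideal.subset_span) b hbI
      have hcI : c ∈ Submodule.annihilator I := by
        rw [Submodule.mem_annihilator]
        intro m hm
        rw [hspan] at hm
        have hker : Ideal.span S ≤ (LinearMap.ker (LinearMap.mulLeft R c) : Submodule R R) := by
          rw [Ideal.span_le]
          intro a ha
          simpa using hc1 a ha
        simpa using hker hm
      have := Submodule.mem_annihilator.mp hb c hcI
      exact hc2 (by simpa [smul_eq_mul, mul_comm] using this)
  · rintro ⟨J, hJ⟩ S hSc hSI b hb
    rw [hJ, Submodule.mem_annihilator] at hb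
    push_neg at hb
    obtain ⟨j, hjJ, hjb⟩ := hb
    refine ⟨j, fun a ha => ?_, ?_⟩
    · have := Submodule.mem_annihilator.mp (hJ ▸ hSI ha) j hjJ
      simpa [smul_eq_mul, mul_comm] using this
    · simpa [smul_eq_mul, mul_comm] using hjb
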